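/- Let Γ ⊆ SL(2,ℝ) be a convex co-compact classical Schottky group with limit set Λ(Γ) of Hausdorff dimension δ, and let Z : ℂ → ℂ be an entire function agreeing with the Selberg zeta function Z_Γ(s) for Re s > 1 and satisfying, for every C₀ > 0, a bound |Z(s)| ≤ C₁·exp(C₁·|s|^δ) on the strip |Re s| < C₀. Then for every C₀ > 0 there exists a constant C₁ > 0 such that for every real r > 1, the number of zeros s of Z, counted with multiplicity (the order of vanishing of Z at s), satisfying r ≤ |Im s| ≤ r+1 and Re s > −C₀, is at most C₁·r^δ. -/

import Mathlib

open Matrix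

/-- `SL(2,ℝ)`. -/
abbrev SL2R := Matrix.SpecialLinearGroup (Fin 2) ℝ

/-- Möbius action of an element of `SL(2,ℝ)` on `ℝ`. -/
noncomputable def mobiusR (g : SL2R) (x : ℝ) : ℝ :=
  (g 0 0 * x + g 0 1) / (g 1 0 * x + g 1 1)

/-- Möbius action of an element of `SL(2,ℝ)` on `ℂ`. -/
noncomputable def mobiusC (g : SL2R) (z : ℂ) : ℂ :=
  ((g 0 0 : ℝ) * z + (g 0 1 : ℝ)) / ((g 1 0 : ℝ) * z + (g 1 1 : ℝ))

/-- Möbius action of an element of `SL(2,ℝ)` on `ℝ ∪ {∞}`. -/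
noncomputable def mobiusOP (g : SL2R) : OnePoint ℝ → OnePoint ℝ := fun p =>
  Option.elim p
    (if g 1 0 = 0 then (OnePoint.infty : OnePoint ℝ) else ((g 0 0 / g 1 0 : ℝ) : OnePoint ℝ))
    (fun x => if g 1 0 * x + g 1 1 = 0 then (OnePoint.infty : OnePoint ℝ)
      else ((mobiusR g x : ℝ) : OnePoint ℝ))

/-- The data of a convex co-compact classical Schottky group: `2ℓ` pairwise disjoint
nonempty closed bounded intervals `I i = [a i, b i]`, indexed by `Fin l ⊕ Fin l`
(`inl i` plays the role of `I_i` and `inr i` that of `I_{ℓ+i}`), together with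
generators `gen i` sending the complement in `ℝ ∪ {∞}` of the interior of `I (inl i)`
onto `I (inr i)`. -/
structure SchottkyData (l : ℕ) where
  two_le : 2 ≤ l
  a : Fin l ⊕ Fin l → ℝ
  b : Fin l ⊕ Fin l → ℝ
  le : ∀ i, a i ≤ b i
  disjoint : Pairwise fun i j => Disjoint (Set.Icc (a i) (b i)) (Set.Icc (a j) (b j))
  gen : Fin l → SL2R
  maps_onto : ∀ i : Fin l,
    mobiusOP (gen i) '' ((fun x : ℝ => (x : OnePoint ℝ)) '' Set.Ioo (a (.inl i)) (b (.inl i)))ᶜ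
      = (fun x : ℝ => (x : OnePoint ℝ)) '' Set.Icc (a (.inr i)) (b (.inr i))

/-- The Schottky group: the subgroup of `SL(2,ℝ)` generated by `γ₁, …, γ_ℓ`
(it automatically contains the `γ_{ℓ+i} = γ_i⁻¹`). -/
def SchottkyData.group {l : ℕ} (S : SchottkyData l) : Subgroup SL2R :=
  Subgroup.closure (Set.range S.gen)

/-- The limit set: the set of real points that are accumulation points in `ℂ` of the
orbit `{γ · i : γ ∈ Γ}` of the point `i` of the upper half-plane, i.e. cluster points
of that orbit along the cofinite filter on `Γ`. -/
noncomputable def SchottkyData.limitSet {l : ℕ} (S : SchottkyData l) : Set ℝ :=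
  {x : ℝ | MapClusterPt (x : ℂ) (Filter.cofinite : Filter S.group)
    (fun γ => mobiusC (γ : SL2R) Complex.I)}

/-- The Hausdorff dimension `δ` of the limit set, as a real number. -/
noncomputable def SchottkyData.dimLimitSet {l : ℕ} (S : SchottkyData l) : ℝ :=
  (dimH S.limitSet).toReal

/-- Inverse hyperbolic cosine. -/
noncomputable def arcosh (x : ℝ) : ℝ := Real.log (x + Real.sqrt (x ^ 2 - 1))

/-- The translation length `ℓ(γ) = 2 arcosh(|tr γ|/2)` of a hyperbolic element. -/
noncomputable def transLength (g : SL2R) : ℝ :=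
  2 * arcosh (|Matrix.trace (g : Matrix (Fin 2) (Fin 2) ℝ)| / 2)

/-- An element of a group is primitive if it is nontrivial and not a proper power. -/
def IsPrimitiveElt {G : Type*} [Monoid G] (γ : G) : Prop :=
  γ ≠ 1 ∧ ∀ (β : G) (k : ℕ), 2 ≤ k → γ ≠ β ^ k

/-- A choice of representative of a conjugacy class. -/
noncomputable def ConjClasses.rep {G : Type*} [Monoid G] (c : ConjClasses G) : G :=
  (ConjClasses.exists_rep c).choose

/-- The conjugacy classes of primitive elements of the Schottky group. -/
def SchottkyData.PrimClasses {l : ℕ} (S : SchottkyData l) : Type _ :=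
  {c : ConjClasses S.group // IsPrimitiveElt c.rep}

/-- The factor `1 - e^{-(s+k) ℓ(γ)}` of the Selberg zeta function, for a conjugacy
class `{γ}` of primitive elements and `k ∈ ℕ`. -/
noncomputable def SchottkyData.zetaFactor {l : ℕ} (S : SchottkyData l) (s : ℂ)
    (c : S.PrimClasses) (k : ℕ) : ℂ :=
  1 - Complex.exp (-(s + (k : ℂ)) * (transLength ((c.1.rep : S.group) : SL2R) : ℂ))

/-- The Selberg zeta function `Z_Γ(s) = ∏_{{γ}} ∏_{k=0}^∞ (1 - e^{-(s+k) ℓ(γ)})` of the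
Schottky group, as a double infinite product (`tprod`). -/
noncomputable def SchottkyData.selbergZeta {l : ℕ} (S : SchottkyData l) (s : ℂ) : ℂ :=
  ∏' c : S.PrimClasses, ∏' k : ℕ, S.zetaFactor s c k

namespace SchottkyAux
open Filter Topology Function


lemma norm_prod_sub_one_le {ι : Type*} (D : Finset ι) (g : ι → ℂ) (e : ι → ℝ)
    (hg : ∀ i ∈ D, ‖g i - 1‖ ≤ e i) (he : ∀ i ∈ D, 0 ≤ e i) :
    ‖(∏ i ∈ D, g i) - 1‖ ≤ Real.exp (∑ i ∈ D, e i) - 1 := by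
  induction D using Finset.cons_induction with
  | empty => simp
  | cons a D ha ih =>
    have hP : ‖(∏ i ∈ D, g i) - 1‖ ≤ Real.exp (∑ i ∈ D, e i) - 1 :=
      ih (fun i hi => hg i (Finset.mem_cons_of_mem hi)) (fun i hi => he i (Finset.mem_cons_of_mem hi))
    have hea : 0 ≤ e a := he a (Finset.mem_cons_self a D)
    have hga : ‖g a - 1‖ ≤ e a := hg a (Finset.mem_cons_self a D)
    have hPn : ‖(∏ i ∈ D, g i)‖ ≤ Real.exp (∑ i ∈ D, e i) := by
      calc ‖(∏ i ∈ D, g i)‖ ≤ ‖(∏ i ∈ D, g i) - 1‖ + 1 := by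
            simpa using norm_add_le ((∏ i ∈ D, g i) - 1) 1
        _ ≤ Real.exp (∑ i ∈ D, e i) := by linarith
    rw [Finset.prod_cons, Finset.sum_cons]
    have key : g a * (∏ i ∈ D, g i) - 1
        = (g a - 1) * (∏ i ∈ D, g i) + ((∏ i ∈ D, g i) - 1) := by ring
    rw [key]
    calc ‖(g a - 1) * (∏ i ∈ D, g i) + ((∏ i ∈ D, g i) - 1)‖
        ≤ ‖(g a - 1) * (∏ i ∈ D, g i)‖ + ‖(∏ i ∈ D, g i) - 1‖ := norm_add_le _ _
      _ = ‖g a - 1‖ * ‖(∏ i ∈ D, g i)‖ + ‖(∏ i ∈ D, g i) - 1‖ := by rw [norm_mul]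
      _ ≤ e a * Real.exp (∑ i ∈ D, e i) + (Real.exp (∑ i ∈ D, e i) - 1) := by
          have := mul_le_mul hga hPn (norm_nonneg _) hea
          linarith
      _ = (e a + 1) * Real.exp (∑ i ∈ D, e i) - 1 := by ring
      _ ≤ Real.exp (e a) * Real.exp (∑ i ∈ D, e i) - 1 := by
          have h1 : e a + 1 ≤ Real.exp (e a) := by
            have := Real.add_one_le_exp (e a); linarith
          have h2 : (0:ℝ) < Real.exp (∑ i ∈ D, e i) := Real.exp_pos _
          nlinarith
      _ = Real.exp (e a + ∑ i ∈ D, e i) - 1 := by rw [← Real.exp_add]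

lemma norm_tprod_sub_one_le {ι : Type*} (g : ι → ℂ) {B : ℝ} (hB : 0 ≤ B)
    (h : ∀ D : Finset ι, ‖(∏ i ∈ D, g i) - 1‖ ≤ B) : ‖(∏' i, g i) - 1‖ ≤ B := by
  by_cases hm : Multipliable g
  · have ht : Tendsto (fun D : Finset ι => ∏ i ∈ D, g i) atTop (𝓝 (∏' i, g i)) := hm.hasProd
    have ht2 : Tendsto (fun D : Finset ι => ‖(∏ i ∈ D, g i) - 1‖) atTop
        (𝓝 ‖(∏' i, g i) - 1‖) := (ht.sub tendsto_const_nhds).norm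
    exact le_of_tendsto ht2 (Eventually.of_forall h)
  · simpa [tprod_eq_one_of_not_multipliable hm] using hB

lemma tprod_eq_zero_of_eq_zero {ι : Type*} {g : ι → ℂ} (i₀ : ι) (h : g i₀ = 0) :
    (∏' i, g i) = 0 := by
  have hp : HasProd g 0 := by
    have : (fun D : Finset ι => ∏ i ∈ D, g i) =ᶠ[atTop] (fun _ => (0:ℂ)) := by
      filter_upwards [eventually_ge_atTop ({i₀} : Finset ι)] with D hD
      exact Finset.prod_eq_zero (hD (Finset.mem_singleton_self i₀)) h
    exact (tendsto_congr' this).mpr tendsto_const_nhds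
  exact hp.tprod_eq

lemma hasProd_of_mem_Icc {ι : Type*} (g : ι → ℝ) (h : ∀ i, g i ∈ Set.Icc (0:ℝ) 1) :
    HasProd g (⨅ D : Finset ι, ∏ i ∈ D, g i) := by
  classical
  have anti : Antitone (fun D : Finset ι => ∏ i ∈ D, g i) := by
    intro D D' hDD'
    show (∏ i ∈ D', g i) ≤ ∏ i ∈ D, g i
    have hsplit : (∏ i ∈ D' \ D, g i) * (∏ i ∈ D, g i) = ∏ i ∈ D', g i :=
      Finset.prod_sdiff hDD'
    rw [← hsplit]
    exact mul_le_of_le_one_left (Finset.prod_nonneg fun i _ => (h i).1)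
      (Finset.prod_le_one (fun i _ => (h i).1) (fun i _ => (h i).2))
  have hbdd : BddBelow (Set.range fun D : Finset ι => ∏ i ∈ D, g i) := by
    refine ⟨0, ?_⟩
    rintro x ⟨D, rfl⟩
    exact Finset.prod_nonneg fun i _ => (h i).1
  exact tendsto_atTop_ciInf anti hbdd

lemma iInf_prod_nonneg {ι : Type*} (g : ι → ℝ) (h : ∀ i, g i ∈ Set.Icc (0:ℝ) 1) :
    0 ≤ ⨅ D : Finset ι, ∏ i ∈ D, g i :=
  le_ciInf fun D => Finset.prod_nonneg fun i _ => (h i).1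

lemma iInf_prod_le {ι : Type*} (g : ι → ℝ) (h : ∀ i, g i ∈ Set.Icc (0:ℝ) 1) (D : Finset ι) :
    (⨅ D : Finset ι, ∏ i ∈ D, g i) ≤ ∏ i ∈ D, g i := by
  refine ciInf_le ?_ D
  refine ⟨0, ?_⟩
  rintro x ⟨D', rfl⟩
  exact Finset.prod_nonneg fun i _ => (h i).1

lemma hasProd_complex_of_mem_Icc {ι : Type*} (g : ι → ℝ) (h : ∀ i, g i ∈ Set.Icc (0:ℝ) 1) :
    HasProd (fun i => ((g i : ℝ) : ℂ)) (((⨅ D : Finset ι, ∏ i ∈ D, g i) : ℝ) : ℂ) := by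
  exact (hasProd_of_mem_Icc g h).map Complex.ofRealHom.toMonoidHom Complex.continuous_ofReal


/-- The norm of the factor `1 - exp(-(s+k)t)` minus 1. -/
lemma norm_factor (s : ℂ) (k : ℕ) (t : ℝ) :
    ‖(1 - Complex.exp (-(s + (k:ℂ)) * (t:ℂ))) - 1‖ = Real.exp (-(s.re + k) * t) := by
  have h1 : (1 - Complex.exp (-(s + (k:ℂ)) * (t:ℂ))) - 1 = -Complex.exp (-(s + (k:ℂ)) * (t:ℂ)) := by
    ring
  rw [h1, norm_neg, Complex.norm_exp]
  congr 1
  simp [Complex.add_re, Complex.mul_re, Complex.ofReal_re, Complex.ofReal_im]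
  try ring

lemma factor_ne_zero_of_neg {t : ℝ} (ht : t < 0) {s : ℂ} (hs : 0 < s.re) (k : ℕ) :
    (1 - Complex.exp (-(s + (k:ℂ)) * (t:ℂ))) ≠ 0 := by
  intro h
  have he : Complex.exp (-(s + (k:ℂ)) * (t:ℂ)) = 1 := by
    have : (1:ℂ) - Complex.exp (-(s + (k:ℂ)) * (t:ℂ)) = 0 := h
    linear_combination -this
  have habs : ‖Complex.exp (-(s + (k:ℂ)) * (t:ℂ))‖ = 1 := by rw [he]; simp
  rw [Complex.norm_exp] at habs
  have hre : (-(s + (k:ℂ)) * (t:ℂ)).re = -(s.re + k) * t := by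
    simp [Complex.add_re, Complex.mul_re, Complex.ofReal_re, Complex.ofReal_im]
    try ring
  rw [hre] at habs
  have h1 : (0:ℝ) < -(s.re + k) * t := by
    have : (0:ℝ) ≤ (k:ℝ) := Nat.cast_nonneg k
    nlinarith
  have := Real.exp_lt_exp.mpr h1
  rw [Real.exp_zero, habs] at this
  exact lt_irrefl _ this

lemma inner_eq_one_of_neg {t : ℝ} (ht : t < 0) {s : ℂ} (hs : 0 < s.re) :
    (∏' k : ℕ, (1 - Complex.exp (-(s + (k:ℂ)) * (t:ℂ)))) = 1 := by
  set g : ℕ → ℂ := fun k => 1 - Complex.exp (-(s + (k:ℂ)) * (t:ℂ)) with hg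
  apply tprod_eq_one_of_not_multipliable
  rintro ⟨P, hP⟩
  have h2 : ∀ᶠ D in (atTop : Filter (Finset ℕ)), dist (∏ i ∈ D, g i) P < 1 :=
    (Metric.tendsto_nhds.mp hP) 1 one_pos
  obtain ⟨D₀, hD₀⟩ := eventually_atTop.mp h2
  obtain ⟨N, hN⟩ := Finset.exists_nat_subset_range D₀
  set c := ∏ i ∈ D₀, g i with hc
  have hc0 : c ≠ 0 := Finset.prod_ne_zero_iff.mpr fun i _ => factor_ne_zero_of_neg ht hs i
  have hcpos : 0 < ‖c‖ := by
    exact norm_pos_iff.mpr hc0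
  set T : ℝ := (‖P‖ + 3) / ‖c‖ + 1 with hT
  have hTpos : 0 < T := by positivity
  obtain ⟨k, hk⟩ := exists_nat_ge (max (N:ℝ) (Real.log (T + 1) / (-t)))
  have hkN : N ≤ k := Nat.cast_le.mp ((le_max_left _ _).trans hk)
  have hknotin : k ∉ D₀ := fun hmem => by
    have := Finset.mem_range.mp (hN hmem); omega
  -- lower bound for ‖g k‖
  have hgk : T ≤ ‖g k‖ := by
    have h3 : ‖Complex.exp (-(s + (k:ℂ)) * (t:ℂ))‖ = Real.exp (-(s.re + k) * t) := by
      rw [Complex.norm_exp]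
      congr 1
      simp [Complex.add_re, Complex.mul_re, Complex.ofReal_re, Complex.ofReal_im]
      try ring
    have h4 : T + 1 ≤ Real.exp (-(s.re + k) * t) := by
      have hklog : Real.log (T + 1) / (-t) ≤ (k:ℝ) := (le_max_right _ _).trans hk
      have h5 : Real.log (T + 1) ≤ (k:ℝ) * (-t) := by
        rw [div_le_iff₀ (by linarith : (0:ℝ) < -t)] at hklog
        linarith
      have h6 : Real.log (T + 1) ≤ -(s.re + k) * t := by nlinarith
      calc T + 1 = Real.exp (Real.log (T + 1)) := (Real.exp_log (by linarith)).symm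
        _ ≤ Real.exp (-(s.re + k) * t) := Real.exp_le_exp.mpr h6
    have h7 : ‖Complex.exp (-(s + (k:ℂ)) * (t:ℂ))‖ - 1 ≤ ‖g k‖ := by
      have h8 := norm_sub_norm_le (Complex.exp (-(s + (k:ℂ)) * (t:ℂ))) (1:ℂ)
      have h9 : Complex.exp (-(s + (k:ℂ)) * (t:ℂ)) - 1 = -(g k) := by rw [hg]; ring
      rw [h9, norm_neg, norm_one] at h8
      exact h8
    rw [h3] at h7
    linarith
  -- contradiction
  have hA := hD₀ D₀ le_rfl
  have hB := hD₀ (insert k D₀) (Finset.subset_insert k D₀)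
  rw [Finset.prod_insert hknotin, ← hc] at hB
  rw [← hc] at hA
  rw [dist_eq_norm] at hA hB
  have hgc : ‖g k‖ * ‖c‖ ≤ ‖P‖ + 1 := by
    have h10 := norm_sub_norm_le (g k * c) P
    rw [norm_mul] at h10
    linarith
  have hfinal : ‖P‖ + 3 ≤ ‖g k‖ * ‖c‖ := by
    have h11 : T * ‖c‖ = ‖P‖ + 3 + ‖c‖ := by
      rw [hT, add_mul, one_mul, div_mul_cancel₀ _ (ne_of_gt hcpos)]
    nlinarith
  linarith [hcpos]

lemma inner_eq_zero_of_zero (s : ℂ) :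
    (∏' k : ℕ, (1 - Complex.exp (-(s + (k:ℂ)) * ((0:ℝ):ℂ)))) = 0 := by
  have h : ∀ k : ℕ, (1 - Complex.exp (-(s + (k:ℂ)) * ((0:ℝ):ℂ))) = 0 := by
    intro k; simp
  rw [tprod_congr h]
  have hp : HasProd (fun _ : ℕ => (0:ℂ)) 0 := by
    have : (fun D : Finset ℕ => ∏ _i ∈ D, (0:ℂ)) =ᶠ[atTop] (fun _ => (0:ℂ)) := by
      filter_upwards [eventually_ge_atTop ({0} : Finset ℕ)] with D hD
      exact Finset.prod_eq_zero (hD (Finset.mem_singleton_self 0)) rfl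
    exact (tendsto_congr' this).mpr tendsto_const_nhds
  exact hp.tprod_eq

/-- Geometric-series bound for the exponent sums. -/
lemma sum_exp_le {t : ℝ} (ht : 0 < t) (x : ℝ) (D : Finset ℕ) :
    ∑ k ∈ D, Real.exp (-(x + k) * t) ≤ Real.exp (-x * t) / (1 - Real.exp (-t)) := by
  have hr0 : (0:ℝ) ≤ Real.exp (-t) := (Real.exp_pos _).le
  have hr1 : Real.exp (-t) < 1 := Real.exp_lt_one_iff.mpr (by linarith)
  have heq : ∀ k : ℕ, Real.exp (-(x + k) * t) = Real.exp (-x * t) * Real.exp (-t) ^ k := by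
    intro k
    rw [← Real.exp_nat_mul, ← Real.exp_add]
    congr 1
    ring
  have hsumm : Summable (fun k : ℕ => Real.exp (-x * t) * Real.exp (-t) ^ k) :=
    (summable_geometric_of_lt_one hr0 hr1).mul_left _
  calc ∑ k ∈ D, Real.exp (-(x + k) * t)
      = ∑ k ∈ D, Real.exp (-x * t) * Real.exp (-t) ^ k := Finset.sum_congr rfl fun k _ => heq k
    _ ≤ ∑' k : ℕ, Real.exp (-x * t) * Real.exp (-t) ^ k := by
        refine hsumm.sum_le_tsum D (fun k _ => by positivity)
    _ = Real.exp (-x * t) * (1 - Real.exp (-t))⁻¹ := by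
        rw [tsum_mul_left, tsum_geometric_of_lt_one hr0 hr1]
    _ = Real.exp (-x * t) / (1 - Real.exp (-t)) := by rw [div_eq_mul_inv]

lemma eps_nonneg {t : ℝ} (ht : 0 < t) (x : ℝ) :
    0 ≤ Real.exp (-x * t) / (1 - Real.exp (-t)) := by
  have hr1 : Real.exp (-t) < 1 := Real.exp_lt_one_iff.mpr (by linarith)
  have h2 : (0:ℝ) < 1 - Real.exp (-t) := by linarith
  positivity

lemma inner_bound_of_pos {t : ℝ} (ht : 0 < t) (s : ℂ) :
    ‖(∏' k : ℕ, (1 - Complex.exp (-(s + (k:ℂ)) * (t:ℂ)))) - 1‖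
      ≤ Real.exp (Real.exp (-s.re * t) / (1 - Real.exp (-t))) - 1 := by
  refine norm_tprod_sub_one_le _ ?_ ?_
  · have := eps_nonneg ht s.re
    have := Real.one_le_exp this
    linarith
  · intro D
    have h1 := norm_prod_sub_one_le D (fun k : ℕ => 1 - Complex.exp (-(s + (k:ℂ)) * (t:ℂ)))
      (fun k : ℕ => Real.exp (-(s.re + k) * t))
      (fun k _ => le_of_eq (norm_factor s k t)) (fun k _ => (Real.exp_pos _).le)
    refine h1.trans ?_
    have h2 := sum_exp_le ht s.re D
    have := Real.exp_le_exp.mpr h2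
    linarith


set_option maxHeartbeats 1000000 in
lemma zeta_lower_bound {ι : Type*} (ℓ : ι → ℝ) (A₀ : ℝ) (hA₀ : 1 < A₀)
    (hne : (∏' i, ∏' k : ℕ,
        (1 - Complex.exp (-(((A₀:ℝ):ℂ) + (k:ℂ)) * ((ℓ i : ℝ):ℂ)))) ≠ 0) :
    ∃ A : ℝ, 2 ≤ A ∧ ∀ s : ℂ, A ≤ s.re →
      (1/2 : ℝ) ≤ ‖∏' i, ∏' k : ℕ, (1 - Complex.exp (-(s + (k:ℂ)) * ((ℓ i : ℝ):ℂ)))‖ := by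
  classical
  have hA₀re : (((A₀:ℝ):ℂ)).re = A₀ := Complex.ofReal_re A₀
  have hA₀pos : (0:ℝ) < (((A₀:ℝ):ℂ)).re := by rw [hA₀re]; linarith
  -- no zero lengths
  have h0 : ∀ i, ℓ i ≠ 0 := by
    intro i h
    apply hne
    apply tprod_eq_zero_of_eq_zero i
    rw [h]
    exact inner_eq_zero_of_zero _
  -- real inner factors at A₀
  set u : ι → ℕ → ℝ := fun i k => 1 - Real.exp (-(A₀ + k) * ℓ i) with hu
  have huIcc : ∀ i, 0 < ℓ i → ∀ k, u i k ∈ Set.Icc (0:ℝ) 1 := by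
    intro i hi k
    have hk : (0:ℝ) ≤ (k:ℝ) := Nat.cast_nonneg k
    constructor
    · have h1 : Real.exp (-(A₀ + k) * ℓ i) ≤ 1 := Real.exp_le_one_iff.mpr (by nlinarith)
      simp only [hu]; linarith
    · have := Real.exp_pos (-(A₀ + k) * ℓ i)
      simp only [hu]; linarith
  set v : ι → ℝ := fun i => if 0 < ℓ i then ⨅ D : Finset ℕ, ∏ k ∈ D, u i k else 1 with hv
  have hvIcc : ∀ i, v i ∈ Set.Icc (0:ℝ) 1 := by
    intro i
    simp only [hv]
    by_cases hi : 0 < ℓ i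
    · simp only [if_pos hi]
      refine ⟨iInf_prod_nonneg _ (huIcc i hi), ?_⟩
      have := iInf_prod_le _ (huIcc i hi) ∅
      simpa using this
    · simp [if_neg hi]
  have hVneg : ∀ (s : ℂ), 0 < s.re → ∀ i, ¬ (0 < ℓ i) →
      (∏' k : ℕ, (1 - Complex.exp (-(s + (k:ℂ)) * ((ℓ i : ℝ):ℂ)))) = 1 := fun s hs i hi =>
    inner_eq_one_of_neg (lt_of_le_of_ne (not_lt.mp hi) (h0 i)) hs
  have hinnerA₀ : ∀ i, (∏' k : ℕ,
      (1 - Complex.exp (-(((A₀:ℝ):ℂ) + (k:ℂ)) * ((ℓ i:ℝ):ℂ)))) = ((v i : ℝ) : ℂ) := by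
    intro i
    by_cases hi : 0 < ℓ i
    · have hfun : ∀ k : ℕ, (1 - Complex.exp (-(((A₀:ℝ):ℂ) + (k:ℂ)) * ((ℓ i:ℝ):ℂ)))
          = ((u i k : ℝ) : ℂ) := by
        intro k
        have hc : ((-(A₀ + k) * ℓ i : ℝ) : ℂ) = -(((A₀:ℝ):ℂ) + (k:ℂ)) * ((ℓ i:ℝ):ℂ) := by
          push_cast; ring
        simp only [hu]
        push_cast
        ring
      rw [tprod_congr hfun, (hasProd_complex_of_mem_Icc (u i) (huIcc i hi)).tprod_eq]
      simp only [hv, if_pos hi]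
    · rw [hVneg _ hA₀pos i hi]
      simp [hv, if_neg hi]
  set Q : ℝ := ⨅ D : Finset ι, ∏ i ∈ D, v i with hQdef
  have houter : (∏' i, ∏' k : ℕ,
      (1 - Complex.exp (-(((A₀:ℝ):ℂ) + (k:ℂ)) * ((ℓ i:ℝ):ℂ)))) = ((Q:ℝ):ℂ) := by
    rw [tprod_congr hinnerA₀]
    exact (hasProd_complex_of_mem_Icc v hvIcc).tprod_eq
  have hQne : Q ≠ 0 := by
    intro h
    apply hne
    rw [houter, h]
    simp
  have hQ0 : 0 < Q := (iInf_prod_nonneg v hvIcc).lt_of_ne (Ne.symm hQne)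
  have hvpos : ∀ i, 0 < v i := by
    intro i
    rcases ((hvIcc i).1).lt_or_eq with h | h
    · exact h
    · exfalso
      have h1 := iInf_prod_le v hvIcc {i}
      rw [Finset.prod_singleton, ← h] at h1
      rw [hQdef] at hQ0
      linarith
  have hsum1 : ∀ D : Finset ι, ∑ i ∈ D, (1 - v i) ≤ -Real.log Q := by
    intro D
    have h1 : Real.log (∏ i ∈ D, v i) = ∑ i ∈ D, Real.log (v i) :=
      Real.log_prod (fun i _ => (hvpos i).ne')
    have h2 : ∀ i ∈ D, 1 - v i ≤ -Real.log (v i) := fun i _ => by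
      have := Real.log_le_sub_one_of_pos (hvpos i); linarith
    have h3 : Q ≤ ∏ i ∈ D, v i := iInf_prod_le v hvIcc D
    have h4 := Real.log_le_log hQ0 h3
    calc ∑ i ∈ D, (1 - v i) ≤ ∑ i ∈ D, -Real.log (v i) := Finset.sum_le_sum h2
      _ = -∑ i ∈ D, Real.log (v i) := by rw [Finset.sum_neg_distrib]
      _ = -Real.log (∏ i ∈ D, v i) := by rw [h1]
      _ ≤ -Real.log Q := by linarith
  have hnn1 : (0: ι → ℝ) ≤ fun i => 1 - v i := by
    intro i
    have := (hvIcc i).2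
    simp only [Pi.zero_apply]
    linarith
  have hsummable1 : Summable (fun i => 1 - v i) := summable_of_sum_le hnn1 hsum1
  set w : ι → ℝ := fun i => if 0 < ℓ i then Real.exp (-A₀ * ℓ i) else 0 with hw
  have hw0 : ∀ i, 0 ≤ w i := by
    intro i; simp only [hw]; split
    · exact (Real.exp_pos _).le
    · exact le_refl 0
  have hwle : ∀ i, w i ≤ 1 - v i := by
    intro i
    simp only [hw, hv]
    by_cases hi : 0 < ℓ i
    · simp only [if_pos hi]
      have h1 : (⨅ D : Finset ℕ, ∏ k ∈ D, u i k) ≤ u i 0 := by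
        have := iInf_prod_le (u i) (huIcc i hi) {0}
        simpa using this
      have h2 : u i 0 = 1 - Real.exp (-A₀ * ℓ i) := by simp [hu]
      linarith
    · simp [if_neg hi]
  have hsummw : Summable w := Summable.of_nonneg_of_le hw0 hwle hsummable1
  set W : ℝ := ∑' i, w i with hWdef
  have hWD : ∀ D : Finset ι, ∑ i ∈ D, w i ≤ W := fun D =>
    hsummw.sum_le_tsum D (fun i _ => hw0 i)
  -- the finitely many small lengths
  have hBfin : {i | 0 < ℓ i ∧ ℓ i < 1}.Finite := by
    have hev : ∀ᶠ i in cofinite, w i < Real.exp (-A₀) :=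
      hsummw.tendsto_cofinite_zero.eventually_lt_const (Real.exp_pos (-A₀))
    refine (Filter.eventually_cofinite.mp hev).subset ?_
    rintro i ⟨h1, h2⟩
    simp only [Set.mem_setOf_eq, not_lt, hw, if_pos h1]
    exact Real.exp_le_exp.mpr (by nlinarith)
  set B' : Finset ι := hBfin.toFinset with hB'
  set E : ι → ℝ → ℝ := fun i x =>
    if 0 < ℓ i then Real.exp (Real.exp (-x * ℓ i) / (1 - Real.exp (-ℓ i))) - 1 else 0 with hE
  have hE0 : ∀ i x, 0 ≤ E i x := by
    intro i x
    simp only [hE]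
    split
    · rename_i hi
      have := Real.one_le_exp (eps_nonneg hi x)
      linarith
    · exact le_refl 0
  -- tail bound
  have htail : ∀ i, 1 ≤ ℓ i → ∀ x : ℝ, A₀ ≤ x →
      E i x ≤ 2 * Real.exp 2 * Real.exp (-(x - A₀)) * w i := by
    intro i hi x hx
    have hipos : 0 < ℓ i := by linarith
    have hden : (1/2:ℝ) ≤ 1 - Real.exp (-ℓ i) := by
      have h1 : Real.exp (-ℓ i) ≤ Real.exp (-1 : ℝ) := Real.exp_le_exp.mpr (by linarith)
      have h2 : Real.exp (-1 : ℝ) ≤ 1/2 := by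
        rw [Real.exp_neg]
        have h3 : (2:ℝ) ≤ Real.exp 1 := by
          have := Real.add_one_le_exp (1:ℝ); linarith
        have h4 : (0:ℝ) < Real.exp 1 := Real.exp_pos 1
        rw [inv_le_comm₀ h4 (by norm_num)]
        have h5 : ((1:ℝ)/2)⁻¹ = 2 := by norm_num
        rw [h5]
        exact h3
      linarith
    have hwi : w i = Real.exp (-A₀ * ℓ i) := by simp only [hw, if_pos hipos]
    have hwile : w i ≤ 1 := by
      rw [hwi]
      exact Real.exp_le_one_iff.mpr (by nlinarith)
    have hεle : Real.exp (-x * ℓ i) / (1 - Real.exp (-ℓ i))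
        ≤ 2 * Real.exp (-(x - A₀)) * w i := by
      have h5 : Real.exp (-x * ℓ i) = Real.exp (-(x - A₀) * ℓ i) * Real.exp (-A₀ * ℓ i) := by
        rw [← Real.exp_add]; congr 1; ring
      have h6 : Real.exp (-(x - A₀) * ℓ i) ≤ Real.exp (-(x - A₀)) :=
        Real.exp_le_exp.mpr (by nlinarith)
      have h7 : Real.exp (-x * ℓ i) ≤ Real.exp (-(x - A₀)) * w i := by
        rw [h5, hwi]
        exact mul_le_mul_of_nonneg_right h6 (Real.exp_pos _).le
      have h8 : Real.exp (-x * ℓ i) / (1 - Real.exp (-ℓ i)) ≤ Real.exp (-x * ℓ i) * 2 := by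
        rw [div_le_iff₀ (by linarith)]
        nlinarith [Real.exp_pos (-x * ℓ i)]
      have h9 : (0:ℝ) ≤ Real.exp (-(x - A₀)) := (Real.exp_pos _).le
      nlinarith [Real.exp_pos (-x * ℓ i)]
    have hεle2 : Real.exp (-x * ℓ i) / (1 - Real.exp (-ℓ i)) ≤ 2 := by
      have h10 : Real.exp (-(x - A₀)) ≤ 1 := Real.exp_le_one_iff.mpr (by linarith)
      have h11 : (0:ℝ) ≤ Real.exp (-(x-A₀)) := (Real.exp_pos _).le
      have := hw0 i
      nlinarith [hεle]
    have hEix : E i x = Real.exp (Real.exp (-x * ℓ i) / (1 - Real.exp (-ℓ i))) - 1 := by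
      simp only [hE, if_pos hipos]
    set y : ℝ := Real.exp (-x * ℓ i) / (1 - Real.exp (-ℓ i)) with hy
    have hy0 : 0 ≤ y := eps_nonneg hipos x
    have hexp1 : Real.exp y - 1 ≤ y * Real.exp y := by
      have h12 := Real.add_one_le_exp (-y)
      have h13 : (0:ℝ) < Real.exp y := Real.exp_pos y
      have h14 : Real.exp (-y) = (Real.exp y)⁻¹ := Real.exp_neg y
      rw [h14] at h12
      have h15 : (1 - y) * Real.exp y ≤ 1 := by
        have := mul_le_mul_of_nonneg_right h12 h13.le
        calc (1 - y) * Real.exp y = ((-y) + 1) * Real.exp y := by ring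
          _ ≤ (Real.exp y)⁻¹ * Real.exp y := mul_le_mul_of_nonneg_right h12 h13.le
          _ = 1 := inv_mul_cancel₀ h13.ne'
      nlinarith
    have hexp2 : Real.exp y ≤ Real.exp 2 := Real.exp_le_exp.mpr hεle2
    rw [hEix]
    calc Real.exp y - 1 ≤ y * Real.exp y := hexp1
      _ ≤ y * Real.exp 2 := mul_le_mul_of_nonneg_left hexp2 hy0
      _ ≤ (2 * Real.exp (-(x - A₀)) * w i) * Real.exp 2 := by
          have := Real.exp_pos (2:ℝ)
          nlinarith [hεle]
      _ = 2 * Real.exp 2 * Real.exp (-(x - A₀)) * w i := by ring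
  -- sum of E over any finset
  have hW0 : 0 ≤ W := tsum_nonneg hw0
  have hsumE : ∀ x : ℝ, A₀ ≤ x → ∀ D : Finset ι,
      ∑ i ∈ D, E i x ≤ (∑ i ∈ B', E i x) + 2 * Real.exp 2 * Real.exp (-(x - A₀)) * W := by
    intro x hx D
    have hsplit : ∑ i ∈ D, E i x = ∑ i ∈ D ∩ B', E i x + ∑ i ∈ D \ B', E i x :=
      (Finset.sum_inter_add_sum_sdiff D B' (fun i => E i x)).symm
    have hb1 : ∑ i ∈ D ∩ B', E i x ≤ ∑ i ∈ B', E i x :=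
      Finset.sum_le_sum_of_subset_of_nonneg (Finset.inter_subset_right)
        (fun i _ _ => hE0 i x)
    have hb2 : ∑ i ∈ D \ B', E i x ≤ 2 * Real.exp 2 * Real.exp (-(x - A₀)) * W := by
      have hpt : ∀ i ∈ D \ B', E i x ≤ 2 * Real.exp 2 * Real.exp (-(x - A₀)) * w i := by
        intro i hiD
        by_cases hi : 0 < ℓ i
        · have hi1 : 1 ≤ ℓ i := by
            by_contra hlt
            have : i ∈ B' := by
              rw [hB', Set.Finite.mem_toFinset]
              exact ⟨hi, by linarith⟩
            exact (Finset.mem_sdiff.mp hiD).2 this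
          exact htail i hi1 x hx
        · have : E i x = 0 := by simp only [hE, if_neg hi]
          rw [this]
          have := hw0 i
          positivity
      calc ∑ i ∈ D \ B', E i x ≤ ∑ i ∈ D \ B', 2 * Real.exp 2 * Real.exp (-(x - A₀)) * w i :=
            Finset.sum_le_sum hpt
        _ = 2 * Real.exp 2 * Real.exp (-(x - A₀)) * ∑ i ∈ D \ B', w i := by
            rw [Finset.mul_sum]
        _ ≤ 2 * Real.exp 2 * Real.exp (-(x - A₀)) * W := by
            have := hWD (D \ B')
            have h16 : (0:ℝ) ≤ 2 * Real.exp 2 * Real.exp (-(x - A₀)) := by positivity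
            exact mul_le_mul_of_nonneg_left this h16
    linarith [hsplit, hb1, hb2]
  -- choose A via limits
  have hΦ : Tendsto (fun x => ∑ i ∈ B', E i x) atTop (𝓝 0) := by
    have : Tendsto (fun x => ∑ i ∈ B', E i x) atTop (𝓝 (∑ i ∈ B', (0:ℝ))) := by
      refine tendsto_finset_sum B' (fun i hiB => ?_)
      have hi : 0 < ℓ i := by
        rw [hB', Set.Finite.mem_toFinset] at hiB
        exact hiB.1
      have hfun : E i = fun x =>
          Real.exp (Real.exp (-x * ℓ i) / (1 - Real.exp (-ℓ i))) - 1 := by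
        funext x
        simp only [hE, if_pos hi]
      rw [hfun]
      have t1 : Tendsto (fun x : ℝ => -x * ℓ i) atTop atBot := by
        have := (tendsto_id (α := ℝ)).atTop_mul_const hi
        have h17 : (fun x : ℝ => -x * ℓ i) = fun x : ℝ => -(x * ℓ i) := by
          funext x; ring
        rw [h17]
        exact tendsto_neg_atTop_atBot.comp this
      have t2 : Tendsto (fun x : ℝ => Real.exp (-x * ℓ i)) atTop (𝓝 0) :=
        Real.tendsto_exp_atBot.comp t1
      have t3 : Tendsto (fun x : ℝ => Real.exp (-x * ℓ i) / (1 - Real.exp (-ℓ i)))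
          atTop (𝓝 (0 / (1 - Real.exp (-ℓ i)))) := t2.div_const _
      rw [zero_div] at t3
      have t4 : Tendsto (fun x : ℝ =>
          Real.exp (Real.exp (-x * ℓ i) / (1 - Real.exp (-ℓ i)))) atTop (𝓝 (Real.exp 0)) :=
        (Real.continuous_exp.tendsto 0).comp t3
      rw [Real.exp_zero] at t4
      have t5 := t4.sub_const 1
      simpa using t5
    simpa using this
  have hψ : Tendsto (fun x : ℝ => 2 * Real.exp 2 * Real.exp (-(x - A₀)) * W) atTop (𝓝 0) := by
    have t1 : Tendsto (fun x : ℝ => -(x - A₀)) atTop atBot := by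
      have := tendsto_atTop_add_const_right atTop (-A₀) (tendsto_id (α := ℝ))
      have h18 : (fun x : ℝ => -(x - A₀)) = fun x : ℝ => -(x + -A₀) := by
        funext x; ring
      rw [h18]
      exact tendsto_neg_atTop_atBot.comp this
    have t2 : Tendsto (fun x : ℝ => Real.exp (-(x - A₀))) atTop (𝓝 0) :=
      Real.tendsto_exp_atBot.comp t1
    have t3 := (t2.const_mul (2 * Real.exp 2)).mul_const W
    simpa using t3
  have hev1 : ∀ᶠ x in atTop, ∑ i ∈ B', E i x ≤ 1/8 :=
    hΦ.eventually_le_const (by norm_num)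
  have hev2 : ∀ᶠ x in atTop, 2 * Real.exp 2 * Real.exp (-(x - A₀)) * W ≤ 1/8 :=
    hψ.eventually_le_const (by norm_num)
  have hev3 : ∀ᶠ x in atTop, max 2 A₀ ≤ x := eventually_ge_atTop _
  obtain ⟨A, ⟨hA1, hA2⟩, hA3⟩ := ((hev1.and hev2).and hev3).exists
  have hA₀A : A₀ ≤ A := le_trans (le_max_right 2 A₀) hA3
  have h2A : (2:ℝ) ≤ A := le_trans (le_max_left 2 A₀) hA3
  refine ⟨A, h2A, fun s hs => ?_⟩
  have hsre : 0 < s.re := by linarith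
  have hinner_s : ∀ i,
      ‖(∏' k : ℕ, (1 - Complex.exp (-(s + (k:ℂ)) * ((ℓ i:ℝ):ℂ)))) - 1‖ ≤ E i A := by
    intro i
    by_cases hi : 0 < ℓ i
    · refine (inner_bound_of_pos hi s).trans ?_
      simp only [hE, if_pos hi]
      have hden : 0 < 1 - Real.exp (-ℓ i) := by
        have := Real.exp_lt_one_iff.mpr (neg_lt_zero.mpr hi); linarith
      have h9 : Real.exp (-s.re * ℓ i) ≤ Real.exp (-A * ℓ i) :=
        Real.exp_le_exp.mpr (by nlinarith)
      have h10 : Real.exp (-s.re * ℓ i) / (1 - Real.exp (-ℓ i))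
          ≤ Real.exp (-A * ℓ i) / (1 - Real.exp (-ℓ i)) := by
        rw [div_le_div_iff₀ hden hden]
        nlinarith [h9, hden]
      have := Real.exp_le_exp.mpr h10
      linarith
    · rw [hVneg s hsre i hi]
      simp only [hE, if_neg hi]
      simp
  have houter_bound : ‖(∏' i, ∏' k : ℕ,
      (1 - Complex.exp (-(s + (k:ℂ)) * ((ℓ i:ℝ):ℂ)))) - 1‖ ≤ Real.exp (1/4 : ℝ) - 1 := by
    refine norm_tprod_sub_one_le _ ?_ ?_
    · have := Real.one_le_exp (by norm_num : (0:ℝ) ≤ 1/4); linarith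
    · intro D
      refine (norm_prod_sub_one_le D _ (fun i => E i A)
        (fun i _ => hinner_s i) (fun i _ => hE0 i A)).trans ?_
      have hsum : ∑ i ∈ D, E i A ≤ 1/4 := by
        have := hsumE A hA₀A D
        linarith [hA1, hA2]
      have := Real.exp_le_exp.mpr hsum
      linarith
  have hexp14 : Real.exp (1/4 : ℝ) ≤ 4/3 := by
    have h := Real.add_one_le_exp (-(1/4) : ℝ)
    have hpos : (0:ℝ) < Real.exp (-(1/4):ℝ) := Real.exp_pos _
    have heq : Real.exp (1/4:ℝ) = (Real.exp (-(1/4):ℝ))⁻¹ := by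
      rw [← Real.exp_neg]; norm_num
    rw [heq]
    have h34 : (3/4:ℝ) ≤ Real.exp (-(1/4):ℝ) := by linarith
    rw [inv_le_comm₀ hpos (by norm_num : (0:ℝ) < 4/3)]
    have h5 : ((4:ℝ)/3)⁻¹ = 3/4 := by norm_num
    rw [h5]
    exact h34
  have hfin := norm_sub_norm_le (1:ℂ)
    (∏' i, ∏' k : ℕ, (1 - Complex.exp (-(s + (k:ℂ)) * ((ℓ i:ℝ):ℂ))))
  rw [norm_one, norm_sub_rev] at hfin
  linarith [houter_bound, hexp14, hfin]



lemma differentiable_dslope {f : ℂ → ℂ} (hf : Differentiable ℂ f) (a : ℂ) :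
    Differentiable ℂ (dslope f a) := by
  intro z
  rcases eq_or_ne z a with rfl | hz
  · obtain ⟨p, hp⟩ := hf.analyticAt z
    exact hp.has_fpower_series_dslope_fslope.analyticAt.differentiableAt
  · exact (differentiableAt_dslope_of_ne hz).mpr (hf z)

lemma differentiable_iterate_dslope {f : ℂ → ℂ} (hf : Differentiable ℂ f) (a : ℂ) (n : ℕ) :
    Differentiable ℂ ((swap dslope a)^[n] f) := by
  induction n with
  | zero => exact hf
  | succ n ih =>
    rw [iterate_succ_apply']
    exact differentiable_dslope ih a

lemma dslope_mul_eq {f : ℂ → ℂ} (a : ℂ) (ha : f a = 0) (z : ℂ) :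
    f z = (z - a) * dslope f a z := by
  rcases eq_or_ne z a with rfl | hz
  · simp [ha]
  · rw [dslope_of_ne _ hz, slope_def_field, ha, sub_zero, mul_comm,
      div_mul_cancel₀ _ (sub_ne_zero.mpr hz)]

/-- Global factorization of an entire function at one point, with exponent the order. -/
lemma fact1 {f : ℂ → ℂ} (hf : Differentiable ℂ f) (s₀ : ℂ)
    (hne : ¬ ∀ᶠ z in 𝓝 s₀, f z = 0) :
    ∃ (n : ℕ) (g : ℂ → ℂ), analyticOrderAt f s₀ = (n : ℕ∞) ∧ Differentiable ℂ g ∧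
      g s₀ ≠ 0 ∧ ∀ z, f z = (z - s₀) ^ n * g z := by
  obtain ⟨p, hp⟩ := hf.analyticAt s₀
  have hp0 : p ≠ 0 := fun h => hne (hp.locally_zero_iff.mpr h)
  set n := p.order with hn
  set g := (swap dslope s₀)^[n] f with hg
  have hgd : Differentiable ℂ g := differentiable_iterate_dslope hf s₀ n
  have hgne : g s₀ ≠ 0 := hp.iterate_dslope_fslope_ne_zero hp0
  have hvanish : ∀ j, j < n → (swap dslope s₀)^[j] f s₀ = 0 := by
    intro j hj
    have h1 := (hp.has_fpower_series_iterate_dslope_fslope j).coeff_zero 1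
    have h2 : (FormalMultilinearSeries.fslope^[j] p).coeff 0 = p.coeff j := by
      rw [FormalMultilinearSeries.coeff_iterate_fslope]
      norm_num
    have h3 : p.coeff j = 0 :=
      FormalMultilinearSeries.coeff_eq_zero.mpr (p.apply_eq_zero_of_lt_order hj)
    rw [← h1]
    show (FormalMultilinearSeries.fslope^[j] p).coeff 0 = 0
    rw [h2, h3]
  have key : ∀ k, (∀ j, j < k → (swap dslope s₀)^[j] f s₀ = 0) →
      ∀ z, f z = (z - s₀) ^ k * (swap dslope s₀)^[k] f z := by
    intro k
    induction k with
    | zero => intro _ z; simp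
    | succ k ih =>
      intro hv z
      have h1 := ih (fun j hj => hv j (hj.trans (Nat.lt_succ_self k))) z
      have h2 : (swap dslope s₀)^[k] f z
          = (z - s₀) * dslope ((swap dslope s₀)^[k] f) s₀ z :=
        dslope_mul_eq s₀ (hv k (Nat.lt_succ_self k)) z
      rw [iterate_succ_apply']
      rw [h1, h2]
      show _ = (z - s₀) ^ (k+1) * (swap dslope s₀ ((swap dslope s₀)^[k] f)) z
      rw [Function.swap]
      ring
  have hglobal : ∀ z, f z = (z - s₀) ^ n * g z := key n hvanish
  refine ⟨n, g, ?_, hgd, hgne, hglobal⟩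
  rw [(hf.analyticAt s₀).analyticOrderAt_eq_natCast]
  exact ⟨g, (hp.has_fpower_series_iterate_dslope_fslope n).analyticAt, hgne,
    Eventually.of_forall fun z => by rw [smul_eq_mul]; exact hglobal z⟩

/-- If an entire function is somewhere nonzero, it is not eventually zero near any point. -/
lemma not_eventually_zero {f : ℂ → ℂ} (hf : Differentiable ℂ f) {z₁ : ℂ} (hz₁ : f z₁ ≠ 0)
    (s₀ : ℂ) : ¬ ∀ᶠ z in 𝓝 s₀, f z = 0 := by
  intro h
  have han : AnalyticOnNhd ℂ f Set.univ := fun z _ => hf.analyticAt z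
  have : Set.EqOn f 0 Set.univ := by
    apply han.eqOn_zero_of_preconnected_of_frequently_eq_zero isPreconnected_univ
      (Set.mem_univ s₀)
    exact ((h.filter_mono nhdsWithin_le_nhds).frequently)
  exact hz₁ (this (Set.mem_univ z₁))

/-- Global factorization of an entire function at finitely many points. -/
lemma fact2 {f : ℂ → ℂ} (hf : Differentiable ℂ f) {z₁ : ℂ} (hz₁ : f z₁ ≠ 0) (F : Finset ℂ) :
    ∃ g : ℂ → ℂ, Differentiable ℂ g ∧ (∀ s ∈ F, g s ≠ 0) ∧
      ∀ z, f z = (∏ s ∈ F, (z - s) ^ ((analyticOrderAt f s).toNat)) * g z := by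
  classical
  induction F using Finset.cons_induction with
  | empty => exact ⟨f, hf, by simp, fun z => by simp⟩
  | cons a F ha ih =>
    obtain ⟨g, hgd, hgne, hgeq⟩ := ih
    have hgz₁ : g z₁ ≠ 0 := by
      intro h
      apply hz₁
      rw [hgeq z₁, h, mul_zero]
    obtain ⟨m, h, hord, hhd, hhne, hheq⟩ :=
      fact1 hgd a (not_eventually_zero hgd hgz₁ a)
    -- the order of f at a equals m
    have hPa : (∏ s ∈ F, (a - s) ^ ((analyticOrderAt f s).toNat)) ≠ 0 := by
      rw [Finset.prod_ne_zero_iff]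
      intro s hs
      exact pow_ne_zero _ (sub_ne_zero.mpr (fun h' => ha (h' ▸ hs)))
    have hfa : analyticOrderAt f a = (m : ℕ∞) := by
      rw [(hf.analyticAt a).analyticOrderAt_eq_natCast]
      refine ⟨fun z => (∏ s ∈ F, (z - s) ^ ((analyticOrderAt f s).toNat)) * h z, ?_, ?_, ?_⟩
      · apply AnalyticAt.mul ?_ (hhd.analyticAt a)
        apply Finset.analyticAt_fun_prod
        intro s _
        exact ((analyticAt_id.sub analyticAt_const).pow _)
      · exact mul_ne_zero hPa hhne
      · refine Eventually.of_forall fun z => ?_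
        rw [smul_eq_mul, hgeq z, hheq z]
        ring
    refine ⟨h, hhd, ?_, ?_⟩
    · intro s hs
      rcases Finset.mem_cons.mp hs with rfl | hsF
      · exact hhne
      · intro h0
        apply hgne s hsF
        rw [hheq s, h0, mul_zero]
    · intro z
      rw [Finset.prod_cons, hgeq z, hheq z, hfa]
      simp only [ENat.toNat_coe]
      ring

/-- Jensen-free zero counting via the maximum modulus principle. -/
lemma count_zeros {f : ℂ → ℂ} (hf : Differentiable ℂ f) (z₀ : ℂ) {ρ m M : ℝ}
    (hρ : 0 < ρ) (hm : 0 < m) (hfz₀ : m ≤ ‖f z₀‖)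
    (hM : ∀ z ∈ Metric.sphere z₀ (3*ρ), ‖f z‖ ≤ M)
    (F : Finset ℂ) (hF : ∀ s ∈ F, f s = 0 ∧ s ∈ Metric.closedBall z₀ ρ) :
    ((∑ s ∈ F, (analyticOrderAt f s).toNat : ℕ) : ℝ) ≤ Real.log (M / m) / Real.log 2 := by
  classical
  have hfz₀ne : f z₀ ≠ 0 := fun h => by rw [h, norm_zero] at hfz₀; linarith
  obtain ⟨g, hgd, hgne, hgeq⟩ := fact2 hf hfz₀ne F
  set n : ℕ := ∑ s ∈ F, (analyticOrderAt f s).toNat with hn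
  -- lower bound at the center
  have hcenter : m ≤ ρ ^ n * ‖g z₀‖ := by
    have h1 : ‖f z₀‖ = ‖∏ s ∈ F, (z₀ - s) ^ ((analyticOrderAt f s).toNat)‖ * ‖g z₀‖ := by
      rw [hgeq z₀, norm_mul]
    have h2 : ‖∏ s ∈ F, (z₀ - s) ^ ((analyticOrderAt f s).toNat)‖ ≤ ρ ^ n := by
      rw [norm_prod]
      calc ∏ s ∈ F, ‖(z₀ - s) ^ ((analyticOrderAt f s).toNat)‖
          ≤ ∏ s ∈ F, ρ ^ ((analyticOrderAt f s).toNat) := by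
            refine Finset.prod_le_prod (fun s _ => norm_nonneg _) (fun s hs => ?_)
            rw [norm_pow]
            refine pow_le_pow_left₀ (norm_nonneg _) ?_ _
            have := (hF s hs).2
            rw [Metric.mem_closedBall] at this
            calc ‖z₀ - s‖ = dist z₀ s := by rw [dist_eq_norm]
              _ = dist s z₀ := dist_comm _ _
              _ ≤ ρ := this
        _ = ρ ^ n := by rw [Finset.prod_pow_eq_pow_sum]
    calc m ≤ ‖f z₀‖ := hfz₀
      _ = ‖∏ s ∈ F, (z₀ - s) ^ ((analyticOrderAt f s).toNat)‖ * ‖g z₀‖ := h1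
      _ ≤ ρ ^ n * ‖g z₀‖ := mul_le_mul_of_nonneg_right h2 (norm_nonneg _)
  -- upper bound for g on the sphere
  have hsphere : ∀ z ∈ Metric.sphere z₀ (3*ρ), ‖g z‖ ≤ M / (2*ρ) ^ n := by
    intro z hz
    have hzdist : dist z z₀ = 3*ρ := Metric.mem_sphere.mp hz
    have h3 : (2*ρ) ^ n ≤ ‖∏ s ∈ F, (z - s) ^ ((analyticOrderAt f s).toNat)‖ := by
      rw [norm_prod]
      calc ((2*ρ) ^ n : ℝ)
          = ∏ s ∈ F, (2*ρ) ^ ((analyticOrderAt f s).toNat) := by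
            rw [Finset.prod_pow_eq_pow_sum]
        _ ≤ ∏ s ∈ F, ‖(z - s) ^ ((analyticOrderAt f s).toNat)‖ := by
            refine Finset.prod_le_prod (fun s _ => by positivity) (fun s hs => ?_)
            rw [norm_pow]
            refine pow_le_pow_left₀ (by positivity) ?_ _
            have h4 := (hF s hs).2
            rw [Metric.mem_closedBall] at h4
            have h5 : dist z z₀ ≤ dist z s + dist s z₀ := dist_triangle z s z₀
            calc (2*ρ : ℝ) = 3*ρ - ρ := by ring
              _ ≤ dist z s := by rw [← hzdist]; linarith
              _ = ‖z - s‖ := by rw [dist_eq_norm]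
    have h6 : ‖f z‖ = ‖∏ s ∈ F, (z - s) ^ ((analyticOrderAt f s).toNat)‖ * ‖g z‖ := by
      rw [hgeq z, norm_mul]
    have h7 : (2*ρ) ^ n * ‖g z‖ ≤ M := by
      calc (2*ρ) ^ n * ‖g z‖
          ≤ ‖∏ s ∈ F, (z - s) ^ ((analyticOrderAt f s).toNat)‖ * ‖g z‖ :=
            mul_le_mul_of_nonneg_right h3 (norm_nonneg _)
        _ = ‖f z‖ := h6.symm
        _ ≤ M := hM z hz
    rw [le_div_iff₀ (by positivity)]
    linarith [h7]
  -- maximum modulus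
  have hgz₀le : ‖g z₀‖ ≤ M / (2*ρ) ^ n := by
    refine Complex.norm_le_of_forall_mem_frontier_norm_le
      (Metric.isBounded_ball (x := z₀) (r := 3*ρ)) hgd.diffContOnCl ?_ ?_
    · intro z hz
      rw [frontier_ball z₀ (by positivity : (3:ℝ)*ρ ≠ 0)] at hz
      exact hsphere z hz
    · exact subset_closure (Metric.mem_ball_self (by positivity))
  -- combine
  have hfinal : m * 2 ^ n ≤ M := by
    have h8 : m ≤ ρ ^ n * (M / (2*ρ) ^ n) :=
      hcenter.trans (mul_le_mul_of_nonneg_left hgz₀le (by positivity))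
    have h9 : ρ ^ n * (M / (2*ρ) ^ n) = M / 2 ^ n := by
      rw [mul_pow]
      field_simp
    rw [h9] at h8
    rw [← le_div_iff₀ (by positivity : (0:ℝ) < (2:ℝ) ^ n)]
    linarith
  have hM0 : 0 < M := by
    have : (0:ℝ) < m * 2 ^ n := by positivity
    linarith
  have h10 : (2:ℝ) ^ n ≤ M / m := by
    rw [le_div_iff₀ hm]
    linarith [hfinal]
  have h11 : Real.log ((2:ℝ) ^ n) ≤ Real.log (M / m) :=
    Real.log_le_log (by positivity) h10
  rw [Real.log_pow] at h11
  have hlog2 : (0:ℝ) < Real.log 2 := Real.log_pos (by norm_num)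
  rw [le_div_iff₀ hlog2]
  exact h11

end SchottkyAux

set_option maxHeartbeats 2000000 in
/-- Let `Z` be an entire function agreeing with the Selberg zeta function
of a convex co-compact classical Schottky group for `Re s > 1` and bounded by
`C₁ exp(C₁ |s|^δ)` on every strip `|Re s| < C₀`.  Then for every `C₀ > 0` there is
`C₁ > 0` such that for every `r > 1` the number of zeros `s` of `Z`, counted with
multiplicity (the order of vanishing of `Z` at `s`), with `r ≤ |Im s| ≤ r + 1` and
`Re s > -C₀`, is at most `C₁ r^δ`. -/
theorem schottky_zeta_zero_count {l : ℕ} (S : SchottkyData l) (Z : ℂ → ℂ)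
    (hZ : Differentiable ℂ Z)
    (hagree : ∀ s : ℂ, 1 < s.re → Z s = S.selbergZeta s)
    (hbound : ∀ C₀ : ℝ, 0 < C₀ → ∃ C₁ : ℝ, 0 < C₁ ∧ ∀ s : ℂ, |s.re| < C₀ →
      ‖Z s‖ ≤ C₁ * Real.exp (C₁ * ‖s‖ ^ S.dimLimitSet)) :
    ∀ C₀ : ℝ, 0 < C₀ → ∃ C₁ : ℝ, 0 < C₁ ∧ ∀ r : ℝ, 1 < r →
      ∀ F : Finset ℂ,
        (∀ s ∈ F, Z s = 0 ∧ r ≤ |s.im| ∧ |s.im| ≤ r + 1 ∧ -C₀ < s.re) →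
        ((∑ s ∈ F, (analyticOrderAt Z s).toNat : ℕ) : ℝ)
          ≤ C₁ * r ^ S.dimLimitSet := by
  classical
  intro C₀ hC₀
  have hδ0 : 0 ≤ S.dimLimitSet := ENNReal.toReal_nonneg
  set δ : ℝ := S.dimLimitSet with hδdef
  by_cases hQ : ∃ A₀ : ℝ, 1 < A₀ ∧ Z ((A₀ : ℝ) : ℂ) ≠ 0
  · -- main case
    obtain ⟨A₀, hA₀, hZA₀⟩ := hQ
    set ℓfun : S.PrimClasses → ℝ := fun c => transLength ((c.1.rep : S.group) : SL2R) with hℓfun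
    have hzeq : ∀ s : ℂ, S.selbergZeta s
        = ∏' c, ∏' k : ℕ, (1 - Complex.exp (-(s + (k:ℂ)) * ((ℓfun c : ℝ):ℂ))) := fun s => rfl
    have hzne : (∏' c, ∏' k : ℕ,
        (1 - Complex.exp (-(((A₀:ℝ):ℂ) + (k:ℂ)) * ((ℓfun c:ℝ):ℂ)))) ≠ 0 := by
      rw [← hzeq, ← hagree _ (by rw [Complex.ofReal_re]; exact hA₀)]
      exact hZA₀
    obtain ⟨A, hA2, hlowζ⟩ := SchottkyAux.zeta_lower_bound ℓfun A₀ hA₀ hzne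
    have hlow : ∀ s : ℂ, A ≤ s.re → (1/2:ℝ) ≤ ‖Z s‖ := by
      intro s hs
      rw [hagree s (by linarith), hzeq s]
      exact hlowζ s hs
    set ρ : ℝ := A + C₀ + 1 with hρdef
    have hρ0 : 0 < ρ := by linarith
    obtain ⟨C₁', hC₁'pos, hb⟩ := hbound (A + 3*ρ + 1) (by linarith)
    set K' : ℝ := A + 1/2 + 3*ρ with hK'def
    have hK'0 : 0 ≤ K' := by simp only [hK'def]; linarith
    have hlog2 : (0:ℝ) < Real.log 2 := Real.log_pos (by norm_num)
    set Cst : ℝ := 1 + (|Real.log C₁'| + C₁' * (1 + K') ^ δ) / Real.log 2 with hCst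
    have hcoef0 : 0 ≤ |Real.log C₁'| + C₁' * (1 + K') ^ δ := by
      have h1 : (0:ℝ) ≤ (1 + K') ^ δ := Real.rpow_nonneg (by linarith) δ
      have h2 : (0:ℝ) ≤ |Real.log C₁'| := abs_nonneg _
      nlinarith [hC₁'pos]
    have hCstpos : 0 < Cst := by
      have := div_nonneg hcoef0 hlog2.le
      simp only [hCst]; linarith
    refine ⟨2 * Cst, by linarith, fun r hr F hF => ?_⟩
    have hr0 : (0:ℝ) < r := by linarith
    have hrpow0 : (0:ℝ) < r ^ δ := Real.rpow_pos_of_pos hr0 δ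
    have hrpow1 : (1:ℝ) ≤ r ^ δ := by
      rw [show (1:ℝ) = 1 ^ δ from (Real.one_rpow δ).symm]
      exact Real.rpow_le_rpow zero_le_one (by linarith) hδ0
    -- the one-half counting estimate
    have count_half : ∀ (zc : ℂ), zc.re = A → ‖zc‖ ≤ A + r + 1/2 →
        ∀ (F' : Finset ℂ), (∀ s ∈ F', Z s = 0 ∧ s ∈ Metric.closedBall zc ρ) →
        ((∑ s ∈ F', (analyticOrderAt Z s).toNat : ℕ) : ℝ) ≤ Cst * r ^ δ := by
      intro zc hzcre hzcabs F' hF'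
      set M : ℝ := C₁' * Real.exp (C₁' * ((1 + K') ^ δ * r ^ δ)) with hM
      have hMbound : ∀ z ∈ Metric.sphere zc (3*ρ), ‖Z z‖ ≤ M := by
        intro z hz
        have hdz : dist z zc = 3*ρ := Metric.mem_sphere.mp hz
        have habs : ‖z‖ ≤ (1 + K') * r := by
          have h1 : ‖z‖ - ‖zc‖ ≤ ‖z - zc‖ := norm_sub_norm_le z zc
          have h2 : ‖z - zc‖ = 3*ρ := by rw [← dist_eq_norm]; exact hdz
          have h5 : ‖z‖ ≤ r + K' := by
            have : ‖z‖ ≤ ‖zc‖ + 3*ρ := by linarith [h1, h2]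
            simp only [hK'def]
            linarith [hzcabs]
          calc ‖z‖ ≤ r + K' := h5
            _ ≤ r + K' * r := by nlinarith [hK'0]
            _ = (1 + K') * r := by ring
        have hre : |z.re| < A + 3*ρ + 1 := by
          have h6 : |(z - zc).re| ≤ ‖z - zc‖ := Complex.abs_re_le_norm (z - zc)
          have h7 : ‖z - zc‖ = 3*ρ := by rw [← Complex.dist_eq]; exact hdz
          rw [Complex.sub_re, hzcre] at h6
          rw [h7] at h6
          have h8 : |z.re| ≤ |z.re - A| + |A| := by
            have := abs_sub_abs_le_abs_sub z.re A
            have h9 := abs_abs_sub_abs_le_abs_sub z.re A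
            calc |z.re| = |z.re - A + A| := by ring_nf
              _ ≤ |z.re - A| + |A| := abs_add_le _ _
          have hAabs : |A| = A := abs_of_pos (by linarith)
          rw [hAabs] at h8
          linarith
        have hZb := hb z hre
        have habsδ : ‖z‖ ^ δ ≤ (1 + K') ^ δ * r ^ δ := by
          calc ‖z‖ ^ δ ≤ ((1 + K') * r) ^ δ :=
              Real.rpow_le_rpow (norm_nonneg z) habs hδ0
            _ = (1 + K') ^ δ * r ^ δ := Real.mul_rpow (by linarith) hr0.le
        calc ‖Z z‖ ≤ C₁' * Real.exp (C₁' * ‖z‖ ^ δ) := hZb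
          _ ≤ M := by
              simp only [hM]
              have h10 := Real.exp_le_exp.mpr (mul_le_mul_of_nonneg_left habsδ hC₁'pos.le)
              nlinarith [h10, hC₁'pos]
      have hcenter : (1/2:ℝ) ≤ ‖Z zc‖ := hlow zc (by rw [hzcre])
      have hcount := SchottkyAux.count_zeros hZ zc hρ0 (by norm_num : (0:ℝ) < 1/2)
        hcenter hMbound F' hF'
      refine hcount.trans ?_
      have hM0 : 0 < M := by positivity
      have hlogM : Real.log (M / (1/2)) = Real.log M + Real.log 2 := by
        rw [div_eq_mul_inv, Real.log_mul hM0.ne' (by norm_num)]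
        norm_num
      have hlogM2 : Real.log M = Real.log C₁' + C₁' * ((1 + K') ^ δ * r ^ δ) := by
        simp only [hM]
        rw [Real.log_mul hC₁'pos.ne' (Real.exp_pos _).ne', Real.log_exp]
      rw [hlogM, hlogM2, div_le_iff₀ hlog2]
      have e0 : (0:ℝ) ≤ (1 + K') ^ δ := Real.rpow_nonneg (by linarith) δ
      have e1 : Real.log C₁' ≤ |Real.log C₁'| * r ^ δ := by
        have := le_abs_self (Real.log C₁')
        nlinarith [abs_nonneg (Real.log C₁'), hrpow1]
      have e2 : Real.log 2 ≤ Real.log 2 * r ^ δ := by nlinarith [hrpow1, hlog2]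
      have e3 : Cst * Real.log 2 = Real.log 2 + (|Real.log C₁'| + C₁' * (1 + K') ^ δ) := by
        simp only [hCst]
        rw [add_mul, one_mul, div_mul_cancel₀ _ hlog2.ne']
      have e4 : Cst * r ^ δ * Real.log 2 = (Cst * Real.log 2) * r ^ δ := by ring
      rw [e4, e3]
      nlinarith [e1, e2, hrpow0, hrpow1, hlog2, hC₁'pos, e0]
    -- split according to the sign of the imaginary part
    have hsplitnat := Finset.sum_filter_add_sum_filter_not F (fun s => 0 ≤ s.im)
      (fun s => (analyticOrderAt Z s).toNat)
    set Fp : Finset ℂ := F.filter (fun s => 0 ≤ s.im) with hFp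
    set Fm : Finset ℂ := F.filter (fun s => ¬ 0 ≤ s.im) with hFm
    have hrelt : ∀ s ∈ F, s.re < A := by
      intro s hs
      by_contra h
      have h1 := hlow s (not_lt.mp h)
      have h2 := (hF s hs).1
      rw [h2, norm_zero] at h1
      linarith
    have hmemp : ∀ s ∈ Fp, Z s = 0 ∧ s ∈ Metric.closedBall (⟨A, r + 1/2⟩ : ℂ) ρ := by
      intro s hs
      rw [hFp, Finset.mem_filter] at hs
      obtain ⟨hsF, hsim⟩ := hs
      obtain ⟨hZs, him1, him2, hre1⟩ := hF s hsF
      refine ⟨hZs, ?_⟩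
      rw [Metric.mem_closedBall, Complex.dist_eq]
      have habsim : |s.im| = s.im := abs_of_nonneg hsim
      rw [habsim] at him1 him2
      have h1 : ‖s - ⟨A, r + 1/2⟩‖
          ≤ |(s - ⟨A, r + 1/2⟩).re| + |(s - ⟨A, r + 1/2⟩).im| :=
        Complex.norm_le_abs_re_add_abs_im _
      have h2 : (s - (⟨A, r + 1/2⟩ : ℂ)).re = s.re - A := rfl
      have h3 : (s - (⟨A, r + 1/2⟩ : ℂ)).im = s.im - (r + 1/2) := rfl
      rw [h2, h3] at h1
      have h4 : |s.re - A| ≤ A + C₀ := by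
        rw [abs_le]
        constructor
        · have := hrelt s hsF; linarith [hre1]
        · have := hrelt s hsF; linarith
      have h5 : |s.im - (r + 1/2)| ≤ 1/2 := by
        rw [abs_le]; constructor <;> linarith
      simp only [hρdef]
      linarith
    have hmemm : ∀ s ∈ Fm, Z s = 0 ∧ s ∈ Metric.closedBall (⟨A, -(r + 1/2)⟩ : ℂ) ρ := by
      intro s hs
      rw [hFm, Finset.mem_filter] at hs
      obtain ⟨hsF, hsim⟩ := hs
      obtain ⟨hZs, him1, him2, hre1⟩ := hF s hsF
      refine ⟨hZs, ?_⟩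
      rw [Metric.mem_closedBall, Complex.dist_eq]
      have hsim' : s.im < 0 := not_le.mp hsim
      have habsim : |s.im| = -s.im := abs_of_neg hsim'
      rw [habsim] at him1 him2
      have h1 : ‖s - ⟨A, -(r + 1/2)⟩‖
          ≤ |(s - ⟨A, -(r + 1/2)⟩).re| + |(s - ⟨A, -(r + 1/2)⟩).im| :=
        Complex.norm_le_abs_re_add_abs_im _
      have h2 : (s - (⟨A, -(r + 1/2)⟩ : ℂ)).re = s.re - A := rfl
      have h3 : (s - (⟨A, -(r + 1/2)⟩ : ℂ)).im = s.im + (r + 1/2) := by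
        show s.im - (-(r + 1/2)) = s.im + (r + 1/2)
        ring
      rw [h2, h3] at h1
      have h4 : |s.re - A| ≤ A + C₀ := by
        rw [abs_le]
        constructor
        · have := hrelt s hsF; linarith [hre1]
        · have := hrelt s hsF; linarith
      have h5 : |s.im + (r + 1/2)| ≤ 1/2 := by
        rw [abs_le]; constructor <;> linarith
      simp only [hρdef]
      linarith
    have habsp : ‖(⟨A, r + 1/2⟩ : ℂ)‖ ≤ A + r + 1/2 := by
      have h1 := Complex.norm_le_abs_re_add_abs_im (⟨A, r + 1/2⟩ : ℂ)
      have h2 : (⟨A, r + 1/2⟩ : ℂ).re = A := rfl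
      have h3 : (⟨A, r + 1/2⟩ : ℂ).im = r + 1/2 := rfl
      rw [h2, h3] at h1
      have h4 : |A| = A := abs_of_pos (by linarith)
      have h5 : |r + 1/2| = r + 1/2 := abs_of_pos (by linarith)
      rw [h4, h5] at h1
      linarith
    have habsm : ‖(⟨A, -(r + 1/2)⟩ : ℂ)‖ ≤ A + r + 1/2 := by
      have h1 := Complex.norm_le_abs_re_add_abs_im (⟨A, -(r + 1/2)⟩ : ℂ)
      have h2 : (⟨A, -(r + 1/2)⟩ : ℂ).re = A := rfl
      have h3 : (⟨A, -(r + 1/2)⟩ : ℂ).im = -(r + 1/2) := rfl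
      rw [h2, h3] at h1
      have h4 : |A| = A := abs_of_pos (by linarith)
      have h5 : |(-(r + 1/2))| = r + 1/2 := by
        rw [abs_neg]; exact abs_of_pos (by linarith)
      rw [h4, h5] at h1
      linarith
    have hcountp := count_half (⟨A, r + 1/2⟩ : ℂ) rfl habsp Fp hmemp
    have hcountm := count_half (⟨A, -(r + 1/2)⟩ : ℂ) rfl habsm Fm hmemm
    have hsum : ((∑ s ∈ F, (analyticOrderAt Z s).toNat : ℕ) : ℝ)
        = ((∑ s ∈ Fp, (analyticOrderAt Z s).toNat : ℕ) : ℝ)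
          + ((∑ s ∈ Fm, (analyticOrderAt Z s).toNat : ℕ) : ℝ) := by
      rw [← Nat.cast_add]
      congr 1
      rw [← hsplitnat]
    rw [hsum]
    calc ((∑ s ∈ Fp, (analyticOrderAt Z s).toNat : ℕ) : ℝ)
          + ((∑ s ∈ Fm, (analyticOrderAt Z s).toNat : ℕ) : ℝ)
        ≤ Cst * r ^ δ + Cst * r ^ δ := add_le_add hcountp hcountm
      _ = 2 * Cst * r ^ δ := by ring
  · -- degenerate case : Z vanishes identically
    push_neg at hQ
    have hZ0 : ∀ z : ℂ, Z z = 0 := by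
      have hfreq : ∃ᶠ z in nhdsWithin (2:ℂ) {(2:ℂ)}ᶜ, Z z = 0 := by
        rw [Filter.frequently_iff]
        intro U hU
        rw [Metric.mem_nhdsWithin_iff] at hU
        obtain ⟨ε, hε, hsub⟩ := hU
        have hm : 0 < min ε 1 / 2 := by positivity
        refine ⟨((2 + min ε 1 / 2 : ℝ) : ℂ), hsub ⟨?_, ?_⟩, ?_⟩
        · rw [Metric.mem_ball]
          have hd : dist (((2 + min ε 1 / 2 : ℝ)) : ℂ) 2 = |min ε 1 / 2| := by
            rw [Complex.dist_eq]
            have he : ((2 + min ε 1 / 2 : ℝ) : ℂ) - 2 = ((min ε 1 / 2 : ℝ) : ℂ) := by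
              push_cast; ring
            rw [he, Complex.norm_real, Real.norm_eq_abs]
          rw [hd, abs_of_pos hm]
          have := min_le_left ε 1
          linarith
        · simp only [Set.mem_compl_iff, Set.mem_singleton_iff]
          intro h
          have h2 : (2 + min ε 1 / 2 : ℝ) = 2 := by exact_mod_cast h
          linarith
        · exact hQ _ (by linarith)
      have han : AnalyticOnNhd ℂ Z Set.univ := fun z _ => hZ.analyticAt z
      have heq := han.eqOn_zero_of_preconnected_of_frequently_eq_zero
        isPreconnected_univ (Set.mem_univ (2:ℂ)) hfreq
      exact fun z => heq (Set.mem_univ z)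
    refine ⟨1, one_pos, fun r hr F hF => ?_⟩
    have hzero : ∀ s ∈ F, (analyticOrderAt Z s).toNat = 0 := by
      intro s _
      have h1 : analyticOrderAt Z s = ⊤ :=
        analyticOrderAt_eq_top.mpr (Filter.Eventually.of_forall fun z => hZ0 z)
      simp [h1]
    rw [Finset.sum_congr rfl hzero]
    simp only [Finset.sum_const_zero, Nat.cast_zero]
    have h2 : (0:ℝ) < r ^ δ := Real.rpow_pos_of_pos (by linarith) δ
    linarith
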